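/- Let Ω be the square annulus. Then the L¹TV energy of the empty set equals E_λ(∅) = λ(4δL + 8δr + 4δ²); equivalently, the area of the square annulus is vol(Ω) = 4δL + 8δr + 4δ². -/

import Mathlib

open Metric MeasureTheory Set Real
open scoped ENNReal

/-! ### Auxiliary: distance to an interval -/

/-- distance from `x` to the interval `[a,b]` -/
noncomputable def Dist1 (a b x : ℝ) : ℝ := max (a - x) (max (x - b) 0)

lemma Dist1_nonneg (a b x : ℝ) : 0 ≤ Dist1 a b x := le_max_of_le_right (le_max_right _ _)

lemma Dist1_le_abs {a b x q : ℝ} (hq : q ∈ Icc a b) : Dist1 a b x ≤ |x - q| := by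
  rcases hq with ⟨h1, h2⟩
  have h3 : a - x ≤ q - x := by linarith
  have h4 : x - b ≤ x - q := by linarith
  have := neg_abs_le (x - q); have := le_abs_self (x - q)
  refine max_le (by linarith) (max_le (by linarith) (abs_nonneg _))

lemma Dist1_exists {a b : ℝ} (hab : a ≤ b) (x : ℝ) :
    ∃ q ∈ Icc a b, |x - q| = Dist1 a b x := by
  rcases le_total x a with h | h
  · exact ⟨a, ⟨le_refl a, hab⟩, by
      rw [abs_of_nonpos (by linarith)]
      unfold Dist1
      rw [max_eq_left (max_le (by linarith) (by linarith))]
      ring⟩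
  rcases le_total x b with h' | h'
  · refine ⟨x, ⟨h, h'⟩, ?_⟩
    have e1 : (x - b) ⊔ (0:ℝ) = 0 := max_eq_right (by linarith)
    unfold Dist1
    rw [e1, sub_self, abs_zero, max_eq_right (by linarith)]
  · exact ⟨b, ⟨hab, le_refl b⟩, by
      rw [abs_of_nonneg (by linarith)]
      unfold Dist1
      rw [max_eq_right, max_eq_left (by linarith)]
      rw [max_eq_left (by linarith)]; linarith⟩

lemma Dist1_le_iff {a b t : ℝ} (ht : 0 ≤ t) (x : ℝ) :
    Dist1 a b x ≤ t ↔ a - t ≤ x ∧ x ≤ b + t := by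
  unfold Dist1
  constructor
  · intro h
    rw [max_le_iff, max_le_iff] at h
    exact ⟨by linarith [h.1], by linarith [h.2.1]⟩
  · rintro ⟨h1, h2⟩
    exact max_le (by linarith) (max_le (by linarith) ht)

lemma continuous_Dist1 (a b : ℝ) : Continuous (Dist1 a b) := by
  unfold Dist1
  exact ((continuous_const.sub continuous_id).max
    ((continuous_id.sub continuous_const).max continuous_const))

lemma Dist1_eq_zero {a b x : ℝ} (h1 : a ≤ x) (h2 : x ≤ b) : Dist1 a b x = 0 := by
  unfold Dist1
  rw [max_eq_right (by linarith : x - b ≤ (0:ℝ)), max_eq_right (by linarith)]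

lemma Dist1_left {a b x : ℝ} (hab : a ≤ b) (h : x ≤ a) : Dist1 a b x = a - x := by
  unfold Dist1
  rw [max_eq_right (by linarith : x - b ≤ (0:ℝ)), max_eq_left (by linarith)]

lemma Dist1_right {a b x : ℝ} (hab : a ≤ b) (h : b ≤ x) : Dist1 a b x = x - b := by
  unfold Dist1
  rw [max_eq_left (by linarith : (0:ℝ) ≤ x - b), max_eq_right (by linarith)]

lemma Dist1_mono {a b a' b' x : ℝ} (ha : a' ≤ a) (hb : b ≤ b') :
    Dist1 a' b' x ≤ Dist1 a b x := by
  unfold Dist1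
  have h1 : a' - x ≤ a - x := by linarith
  have h2 : x - b' ≤ x - b := by linarith
  exact max_le (h1.trans (le_max_left _ _))
    (max_le (h2.trans (le_max_of_le_right (le_max_left _ _))) (le_max_of_le_right (le_max_right _ _)))

/-! ### The cthickening of a square -/

lemma euclid_pt (u v : ℝ) : ∃ q : EuclideanSpace ℝ (Fin 2), q 0 = u ∧ q 1 = v :=
  ⟨WithLp.toLp 2 (![u, v] : Fin 2 → ℝ), rfl, rfl⟩

lemma infDist_square (a b : ℝ) (hab : a ≤ b) (p : EuclideanSpace ℝ (Fin 2)) :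
    infDist p {q : EuclideanSpace ℝ (Fin 2) | q 0 ∈ Icc a b ∧ q 1 ∈ Icc a b}
      = Real.sqrt (Dist1 a b (p 0) ^ 2 + Dist1 a b (p 1) ^ 2) := by
  set K : Set (EuclideanSpace ℝ (Fin 2)) := {q | q 0 ∈ Icc a b ∧ q 1 ∈ Icc a b} with hK
  obtain ⟨q0, hq00, hq01⟩ := Dist1_exists hab (p 0)
  obtain ⟨q1, hq10, hq11⟩ := Dist1_exists hab (p 1)
  obtain ⟨q, hq0, hq1⟩ := euclid_pt q0 q1
  have hqK : q ∈ K := ⟨hq0 ▸ hq00, hq1 ▸ hq10⟩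
  have hdist : dist p q = Real.sqrt (Dist1 a b (p 0) ^ 2 + Dist1 a b (p 1) ^ 2) := by
    rw [EuclideanSpace.dist_eq, Fin.sum_univ_two, hq0, hq1, Real.dist_eq, Real.dist_eq,
      hq01, hq11]
  refine le_antisymm (hdist ▸ infDist_le_dist_of_mem hqK) ?_
  have hne : K.Nonempty := ⟨q, hqK⟩
  rw [infDist_eq_iInf]
  have : Nonempty K := hne.to_subtype
  refine le_ciInf fun ⟨y, hy0, hy1⟩ => ?_
  rw [EuclideanSpace.dist_eq, Fin.sum_univ_two, Real.dist_eq, Real.dist_eq]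
  apply Real.sqrt_le_sqrt
  have h0 := Dist1_le_abs (x := p 0) hy0
  have h1 := Dist1_le_abs (x := p 1) hy1
  have := Dist1_nonneg a b (p 0); have := Dist1_nonneg a b (p 1)
  nlinarith [abs_nonneg (p 0 - y 0), abs_nonneg (p 1 - y 1)]

lemma cthickening_square (a b r : ℝ) (hab : a ≤ b) (hr : 0 < r) :
    cthickening r {q : EuclideanSpace ℝ (Fin 2) | q 0 ∈ Icc a b ∧ q 1 ∈ Icc a b}
      = {p : EuclideanSpace ℝ (Fin 2) |
          Dist1 a b (p 0) ^ 2 + Dist1 a b (p 1) ^ 2 ≤ r ^ 2} := by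
  set K : Set (EuclideanSpace ℝ (Fin 2)) := {q | q 0 ∈ Icc a b ∧ q 1 ∈ Icc a b} with hK
  have hne : K.Nonempty := by
    obtain ⟨q, hq0, hq1⟩ := euclid_pt a a
    exact ⟨q, by simp [hK, hq0, hq1, hab, le_refl]⟩
  ext p
  rw [mem_cthickening_iff,
    ENNReal.le_ofReal_iff_toReal_le (Metric.infEdist_ne_top hne) hr.le]
  have : (Metric.infEDist p K).toReal = infDist p K := rfl
  rw [this, infDist_square a b hab p]
  have hS : 0 ≤ Dist1 a b (p 0) ^ 2 + Dist1 a b (p 1) ^ 2 := by positivity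
  constructor
  · intro h
    have := Real.sq_sqrt hS
    simp only [mem_setOf_eq]
    nlinarith [Real.sqrt_nonneg (Dist1 a b (p 0) ^ 2 + Dist1 a b (p 1) ^ 2)]
  · intro h
    calc Real.sqrt _ ≤ Real.sqrt (r ^ 2) := Real.sqrt_le_sqrt h
    _ = r := Real.sqrt_sq hr.le

/-! ### The circle integrals -/

open intervalIntegral in
lemma int_sqrt_full (r : ℝ) (hr : 0 < r) :
    ∫ x in (-r)..r, Real.sqrt (r ^ 2 - x ^ 2) = π * r ^ 2 / 2 := by
  have h1 : ∫ y in (-1 : ℝ)..1, Real.sqrt (r ^ 2 - (r * y) ^ 2)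
      = r⁻¹ • ∫ x in (r * (-1))..(r * 1), Real.sqrt (r ^ 2 - x ^ 2) :=
    integral_comp_mul_left (fun x => Real.sqrt (r ^ 2 - x ^ 2)) hr.ne'
  have h2 : ∀ y : ℝ, Real.sqrt (r ^ 2 - (r * y) ^ 2) = r * Real.sqrt (1 - y ^ 2) := by
    intro y
    rw [show r ^ 2 - (r * y) ^ 2 = r ^ 2 * (1 - y ^ 2) by ring, Real.sqrt_mul (by positivity),
      Real.sqrt_sq hr.le]
  simp only [h2] at h1
  rw [intervalIntegral.integral_const_mul, integral_sqrt_one_sub_sq] at h1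
  rw [mul_neg_one, mul_one] at h1
  rw [smul_eq_mul] at h1
  have := congrArg (fun t => r * t) h1
  rw [← mul_assoc r r⁻¹, mul_inv_cancel₀ hr.ne', one_mul] at this
  rw [← this]
  ring

open intervalIntegral in
lemma int_sqrt_quarter (r : ℝ) (hr : 0 < r) :
    ∫ x in (0 : ℝ)..r, Real.sqrt (r ^ 2 - x ^ 2) = π * r ^ 2 / 4 := by
  have hsym : ∫ x in (-r)..(0:ℝ), Real.sqrt (r ^ 2 - x ^ 2)
      = ∫ x in (0:ℝ)..r, Real.sqrt (r ^ 2 - x ^ 2) := by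
    have := integral_comp_neg (fun x => Real.sqrt (r ^ 2 - x ^ 2)) (a := 0) (b := r)
    simp only [neg_sq, neg_zero] at this
    exact this.symm
  have hint : IntervalIntegrable (fun x => Real.sqrt (r ^ 2 - x ^ 2)) volume (-r) 0 ∧
      IntervalIntegrable (fun x => Real.sqrt (r ^ 2 - x ^ 2)) volume 0 r := by
    constructor <;> exact (Real.continuous_sqrt.comp
      (continuous_const.sub (continuous_pow 2))).intervalIntegrable _ _
  have := integral_add_adjacent_intervals hint.1 hint.2
  rw [int_sqrt_full r hr] at this
  rw [hsym] at this
  linarith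

/-! ### The slab integral -/

open intervalIntegral in
lemma integral_slab (a b r : ℝ) (hab : a ≤ b) (hr : 0 < r) :
    ∫ x in (a - r)..(b + r), (b - a + 2 * Real.sqrt (r ^ 2 - Dist1 a b x ^ 2))
      = (b - a) ^ 2 + 4 * r * (b - a) + π * r ^ 2 := by
  set f : ℝ → ℝ := fun x => b - a + 2 * Real.sqrt (r ^ 2 - Dist1 a b x ^ 2) with hf
  have hcont : Continuous f := by
    apply continuous_const.add
    apply continuous_const.mul
    exact Real.continuous_sqrt.comp
      (continuous_const.sub ((continuous_Dist1 a b).pow 2))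
  have hint : ∀ u v : ℝ, IntervalIntegrable f volume u v :=
    fun u v => hcont.intervalIntegrable u v
  have hsplit : ∫ x in (a - r)..(b + r), f x
      = (∫ x in (a - r)..a, f x) + ((∫ x in a..b, f x) + ∫ x in b..(b + r), f x) := by
    rw [integral_add_adjacent_intervals (hint a b) (hint b (b + r)),
      integral_add_adjacent_intervals (hint (a - r) a) (hint a (b + r))]
  have hmid : ∫ x in a..b, f x = (b - a) * (b - a + 2 * r) := by
    have : ∫ x in a..b, f x = ∫ _x in a..b, (b - a + 2 * r) := by
      apply intervalIntegral.integral_congr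
      intro x hx
      rw [uIcc_of_le hab] at hx
      simp only [hf, Dist1_eq_zero hx.1 hx.2]
      rw [zero_pow (by norm_num), sub_zero, Real.sqrt_sq hr.le]
    rw [this, intervalIntegral.integral_const, smul_eq_mul]
  have hleft : ∫ x in (a - r)..a, f x = r * (b - a) + π * r ^ 2 / 2 := by
    have h1 : ∫ x in (a - r)..a, f x
        = ∫ x in (a - r)..a, (b - a + 2 * Real.sqrt (r ^ 2 - (a - x) ^ 2)) := by
      apply intervalIntegral.integral_congr
      intro x hx
      rw [uIcc_of_le (by linarith)] at hx
      simp only [hf, Dist1_left hab hx.2]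
    rw [h1, intervalIntegral.integral_add (intervalIntegrable_const)
      (((by fun_prop : Continuous fun x : ℝ => 2 * Real.sqrt (r ^ 2 - (a - x) ^ 2)).intervalIntegrable _ _)),
      intervalIntegral.integral_const, smul_eq_mul, intervalIntegral.integral_const_mul]
    have h2 : ∫ x in (a - r)..a, Real.sqrt (r ^ 2 - (a - x) ^ 2)
        = ∫ x in (a - a)..(a - (a - r)), Real.sqrt (r ^ 2 - x ^ 2) :=
      integral_comp_sub_left (fun x => Real.sqrt (r ^ 2 - x ^ 2)) a
    rw [h2]
    have : a - a = (0:ℝ) := by ring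
    rw [this, show a - (a - r) = r by ring, int_sqrt_quarter r hr]
    ring
  have hright : ∫ x in b..(b + r), f x = r * (b - a) + π * r ^ 2 / 2 := by
    have h1 : ∫ x in b..(b + r), f x
        = ∫ x in b..(b + r), (b - a + 2 * Real.sqrt (r ^ 2 - (x - b) ^ 2)) := by
      apply intervalIntegral.integral_congr
      intro x hx
      rw [uIcc_of_le (by linarith)] at hx
      simp only [hf, Dist1_right hab hx.1]
    rw [h1, intervalIntegral.integral_add (intervalIntegrable_const)
      (((by fun_prop : Continuous fun x : ℝ => 2 * Real.sqrt (r ^ 2 - (x - b) ^ 2)).intervalIntegrable _ _)),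
      intervalIntegral.integral_const, smul_eq_mul, intervalIntegral.integral_const_mul]
    have h2 : ∫ x in b..(b + r), Real.sqrt (r ^ 2 - (x - b) ^ 2)
        = ∫ x in (b - b)..(b + r - b), Real.sqrt (r ^ 2 - x ^ 2) :=
      integral_comp_sub_right (fun x => Real.sqrt (r ^ 2 - x ^ 2)) b
    rw [h2, show b - b = (0:ℝ) by ring, show b + r - b = r by ring, int_sqrt_quarter r hr]
    ring
  rw [hsplit, hmid, hleft, hright]
  ring

/-! ### Volume of the thickened square, in the product plane -/

lemma volume_thick_prod (a b r : ℝ) (hab : a ≤ b) (hr : 0 < r) :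
    volume {z : ℝ × ℝ | Dist1 a b z.1 ^ 2 + Dist1 a b z.2 ^ 2 ≤ r ^ 2}
      = ENNReal.ofReal ((b - a) ^ 2 + 4 * r * (b - a) + π * r ^ 2) := by
  set U : Set (ℝ × ℝ) := {z | Dist1 a b z.1 ^ 2 + Dist1 a b z.2 ^ 2 ≤ r ^ 2} with hU
  have hUm : MeasurableSet U := by
    apply IsClosed.measurableSet
    apply isClosed_le _ continuous_const
    exact (((continuous_Dist1 a b).comp continuous_fst).pow 2).add
      (((continuous_Dist1 a b).comp continuous_snd).pow 2)
  have hslice : ∀ x : ℝ,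
      volume (Prod.mk x ⁻¹' U) = indicator (Icc (a - r) (b + r))
        (fun x => ENNReal.ofReal (b - a + 2 * Real.sqrt (r ^ 2 - Dist1 a b x ^ 2))) x := by
    intro x
    by_cases hx : x ∈ Icc (a - r) (b + r)
    · have hDx : Dist1 a b x ≤ r := (Dist1_le_iff hr.le x).2 ⟨hx.1, hx.2⟩
      set t := Real.sqrt (r ^ 2 - Dist1 a b x ^ 2) with hts
      have htn : 0 ≤ t := Real.sqrt_nonneg _
      have hseq : Prod.mk x ⁻¹' U = Icc (a - t) (b + t) := by
        ext y
        have hDy := Dist1_nonneg a b y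
        have hsub : 0 ≤ r ^ 2 - Dist1 a b x ^ 2 := by
          nlinarith [Dist1_nonneg a b x]
        have ht2 : t ^ 2 = r ^ 2 - Dist1 a b x ^ 2 := Real.sq_sqrt hsub
        simp only [mem_preimage, hU, mem_setOf_eq]
        constructor
        · intro h
          have hy : Dist1 a b y ≤ t := by nlinarith
          exact mem_Icc.2 ((Dist1_le_iff htn y).1 hy)
        · intro h
          have hy : Dist1 a b y ≤ t := (Dist1_le_iff htn y).2 (mem_Icc.1 h)
          nlinarith
      rw [hseq, Real.volume_Icc, indicator_of_mem hx,
        show b + t - (a - t) = b - a + 2 * t by ring]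
    · rw [indicator_of_notMem hx]
      have : Prod.mk x ⁻¹' U = ∅ := by
        ext y
        simp only [mem_preimage, hU, mem_setOf_eq, mem_empty_iff_false, iff_false]
        intro h
        have hDy := Dist1_nonneg a b y
        have hDx : Dist1 a b x ≤ r := by nlinarith [Dist1_nonneg a b x, hr.le]
        exact hx (mem_Icc.2 ((Dist1_le_iff hr.le x).1 hDx))
      rw [this, measure_empty]
  rw [Measure.volume_eq_prod, Measure.prod_apply hUm]
  rw [lintegral_congr hslice, lintegral_indicator measurableSet_Icc _]
  have hg : Continuous fun x => b - a + 2 * Real.sqrt (r ^ 2 - Dist1 a b x ^ 2) := by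
    apply continuous_const.add
    exact continuous_const.mul (Real.continuous_sqrt.comp
      (continuous_const.sub ((continuous_Dist1 a b).pow 2)))
  rw [← ofReal_integral_eq_lintegral_ofReal (hg.integrableOn_Icc)
    (ae_of_all _ fun x => by
      have := Real.sqrt_nonneg (r ^ 2 - Dist1 a b x ^ 2)
      simp only [Pi.zero_apply]
      linarith)]
  rw [MeasureTheory.integral_Icc_eq_integral_Ioc,
    ← intervalIntegral.integral_of_le (by linarith : a - r ≤ b + r),
    integral_slab a b r hab hr]

/-! ### Volume of the thickened square, in Euclidean space -/

lemma volume_thick_euclid (a b r : ℝ) (hab : a ≤ b) (hr : 0 < r) :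
    volume {p : EuclideanSpace ℝ (Fin 2) |
        Dist1 a b (p 0) ^ 2 + Dist1 a b (p 1) ^ 2 ≤ r ^ 2}
      = ENNReal.ofReal ((b - a) ^ 2 + 4 * r * (b - a) + π * r ^ 2) := by
  set U : Set (ℝ × ℝ) := {z | Dist1 a b z.1 ^ 2 + Dist1 a b z.2 ^ 2 ≤ r ^ 2} with hU
  have hUm : MeasurableSet U := by
    apply IsClosed.measurableSet
    apply isClosed_le _ continuous_const
    exact (((continuous_Dist1 a b).comp continuous_fst).pow 2).add
      (((continuous_Dist1 a b).comp continuous_snd).pow 2)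
  have hTm : MeasurableSet (MeasurableEquiv.finTwoArrow (α := ℝ) ⁻¹' U) :=
    (MeasurableEquiv.finTwoArrow (α := ℝ)).measurable hUm
  have hset : {p : EuclideanSpace ℝ (Fin 2) |
        Dist1 a b (p 0) ^ 2 + Dist1 a b (p 1) ^ 2 ≤ r ^ 2}
      = (MeasurableEquiv.toLp 2 (Fin 2 → ℝ)).symm ⁻¹'
          (MeasurableEquiv.finTwoArrow (α := ℝ) ⁻¹' U) := rfl
  rw [hset,
    (EuclideanSpace.volume_preserving_symm_measurableEquiv_toLp (Fin 2)).measure_preimage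
      hTm.nullMeasurableSet,
    (volume_preserving_finTwoArrow ℝ).measure_preimage hUm.nullMeasurableSet]
  exact volume_thick_prod a b r hab hr

/-- The L¹TV energy: one-dimensional Hausdorff measure of the topological boundary
(perimeter for the piecewise-smooth sets considered) plus `λ` times the Lebesgue
volume of the symmetric difference with the data set `Ω`. -/
noncomputable def L1TV (lam : ℝ) (S Ω : Set (EuclideanSpace ℝ (Fin 2))) : ℝ≥0∞ :=
  μH[1] (frontier S) + ENNReal.ofReal lam * volume (symmDiff S Ω)

theorem stmt_11 (L r δ lam : ℝ) (hL : 0 < L) (hr : 0 < r) (hδ : 0 < δ) (hlam : 0 < lam)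
    (Kin Kout Ain Aout Ω : Set (EuclideanSpace ℝ (Fin 2)))
    (hKin : Kin = {p | p 0 ∈ Icc (0 : ℝ) L ∧ p 1 ∈ Icc (0 : ℝ) L})
    (hKout : Kout = {p | p 0 ∈ Icc (-δ) (L + δ) ∧ p 1 ∈ Icc (-δ) (L + δ)})
    (hAin : Ain = cthickening r Kin) (hAout : Aout = cthickening r Kout)
    (hΩ : Ω = Aout \ Ain) :
    L1TV lam ∅ Ω = ENNReal.ofReal (lam * (4 * δ * L + 8 * δ * r + 4 * δ ^ 2)) ∧
    volume Ω = ENNReal.ofReal (4 * δ * L + 8 * δ * r + 4 * δ ^ 2) := by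
  have hAin' : Ain = {p : EuclideanSpace ℝ (Fin 2) |
      Dist1 0 L (p 0) ^ 2 + Dist1 0 L (p 1) ^ 2 ≤ r ^ 2} := by
    rw [hAin, hKin, cthickening_square 0 L r hL.le hr]
  have hAout' : Aout = {p : EuclideanSpace ℝ (Fin 2) |
      Dist1 (-δ) (L + δ) (p 0) ^ 2 + Dist1 (-δ) (L + δ) (p 1) ^ 2 ≤ r ^ 2} := by
    rw [hAout, hKout, cthickening_square (-δ) (L + δ) r (by linarith) hr]
  have hsub : Ain ⊆ Aout := by
    rw [hAin', hAout']
    intro p hp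
    simp only [mem_setOf_eq] at hp ⊢
    have h0 := Dist1_mono (a := 0) (b := L) (a' := -δ) (b' := L + δ) (x := p 0)
      (by linarith) (by linarith)
    have h1 := Dist1_mono (a := 0) (b := L) (a' := -δ) (b' := L + δ) (x := p 1)
      (by linarith) (by linarith)
    have := Dist1_nonneg (-δ) (L + δ) (p 0)
    have := Dist1_nonneg (-δ) (L + δ) (p 1)
    have := Dist1_nonneg 0 L (p 0)
    have := Dist1_nonneg 0 L (p 1)
    nlinarith
  have hvolin : volume Ain = ENNReal.ofReal (L ^ 2 + 4 * r * L + π * r ^ 2) := by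
    rw [hAin']
    have := volume_thick_euclid 0 L r hL.le hr
    simpa using this
  have hvolout : volume Aout
      = ENNReal.ofReal ((L + 2 * δ) ^ 2 + 4 * r * (L + 2 * δ) + π * r ^ 2) := by
    rw [hAout']
    have := volume_thick_euclid (-δ) (L + δ) r (by linarith) hr
    rw [this]
    congr 1
    ring
  have hAinMeas : NullMeasurableSet Ain (volume) := by
    rw [hAin]
    exact (isClosed_cthickening).measurableSet.nullMeasurableSet
  have hfin : volume Ain ≠ ⊤ := by rw [hvolin]; exact ENNReal.ofReal_ne_top
  have hvol : volume Ω = ENNReal.ofReal (4 * δ * L + 8 * δ * r + 4 * δ ^ 2) := by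
    rw [hΩ, measure_diff hsub hAinMeas hfin, hvolin, hvolout,
      ← ENNReal.ofReal_sub _ (by positivity)]
    congr 1
    ring
  refine ⟨?_, hvol⟩
  unfold L1TV
  have hsymm : symmDiff (∅ : Set (EuclideanSpace ℝ (Fin 2))) Ω = Ω := by
    rw [symmDiff_def]
    simp
  rw [frontier_empty, measure_empty, zero_add, hsymm, hvol,
    ← ENNReal.ofReal_mul hlam.le]
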